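/- Let z, y ∈ ℂ satisfy y² = z(z+α²)(z+β²) with y ≠ 0, and set F = (1/2)·I₂ + (2y)⁻¹·[[(α−β)z, α(z+1)], [βz(z+1), −(α−β)z]]. Then: (i) F² = F (F is idempotent); (ii) M(z)·F = F·M(z) = ((α+β)z + y)·F and M(z)·(I₂ − F) = ((α+β)z − y)·(I₂ − F); (iii) consequently, for z ≠ 1, A(z)·F = F·A(z) = ((α+β)z + y)(z−1)⁻¹·F and A(z)·(I₂ − F) = ((α+β)z − y)(z−1)⁻¹·(I₂ − F). -/

import Mathlib

open Matrix

/-- The matrix `M(z) = [[2αz, α(z+1)], [βz(z+1), 2βz]]`. -/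
noncomputable def symbM (α β : ℝ) (z : ℂ) : Matrix (Fin 2) (Fin 2) ℂ :=
  !![2 * (α : ℂ) * z, (α : ℂ) * (z + 1);
     (β : ℂ) * z * (z + 1), 2 * (β : ℂ) * z]

/-- The matrix symbol `A(z) = (z-1)⁻¹ M(z)`. -/
noncomputable def symbA (α β : ℝ) (z : ℂ) : Matrix (Fin 2) (Fin 2) ℂ :=
  (z - 1)⁻¹ • symbM α β z

/-- The spectral projection
`F = ½ I₂ + (2y)⁻¹ [[(α-β)z, α(z+1)], [βz(z+1), -(α-β)z]]`. -/
noncomputable def projF (α β : ℝ) (z y : ℂ) : Matrix (Fin 2) (Fin 2) ℂ :=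
  (2 : ℂ)⁻¹ • (1 : Matrix (Fin 2) (Fin 2) ℂ) +
    (2 * y)⁻¹ • !![((α : ℂ) - (β : ℂ)) * z, (α : ℂ) * (z + 1);
                   (β : ℂ) * z * (z + 1), -(((α : ℂ) - (β : ℂ)) * z)]

/-- If `y² = z(z+α²)(z+β²)` and `y ≠ 0`, then `F` is idempotent, commutes with
`M(z)` with `M F = F M = ((α+β)z + y) F` and `M (I-F) = ((α+β)z - y)(I-F)`, and
consequently, for `z ≠ 1`, `A F = F A = ((α+β)z+y)(z-1)⁻¹ F` and
`A (I-F) = ((α+β)z-y)(z-1)⁻¹ (I-F)`. -/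
theorem projF_idempotent_and_eigenrelations (α β : ℝ) (hα : 0 < α) (hβ : 0 < β)
    (hαβ : α * β = 1) (z y : ℂ)
    (hy : y ^ 2 = z * (z + (α : ℂ) ^ 2) * (z + (β : ℂ) ^ 2)) (hy0 : y ≠ 0) :
    (projF α β z y * projF α β z y = projF α β z y) ∧
    (symbM α β z * projF α β z y = (((α : ℂ) + (β : ℂ)) * z + y) • projF α β z y ∧
      projF α β z y * symbM α β z = (((α : ℂ) + (β : ℂ)) * z + y) • projF α β z y ∧
      symbM α β z * (1 - projF α β z y) =
        (((α : ℂ) + (β : ℂ)) * z - y) • (1 - projF α β z y)) ∧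
    (z ≠ 1 →
      symbA α β z * projF α β z y =
          ((((α : ℂ) + (β : ℂ)) * z + y) * (z - 1)⁻¹) • projF α β z y ∧
        projF α β z y * symbA α β z =
          ((((α : ℂ) + (β : ℂ)) * z + y) * (z - 1)⁻¹) • projF α β z y ∧
        symbA α β z * (1 - projF α β z y) =
          ((((α : ℂ) + (β : ℂ)) * z - y) * (z - 1)⁻¹) • (1 - projF α β z y)) := by
  have hab : (α : ℂ) * (β : ℂ) = 1 := by exact_mod_cast congrArg (Complex.ofReal) hαβ
  set a := (α : ℂ) with ha
  set b := (β : ℂ) with hb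
  set N : Matrix (Fin 2) (Fin 2) ℂ :=
    !![(a - b) * z, a * (z + 1); b * z * (z + 1), -((a - b) * z)] with hNdef
  have hF : projF α β z y = (2 : ℂ)⁻¹ • (1 : Matrix (Fin 2) (Fin 2) ℂ) + (2 * y)⁻¹ • N := rfl
  have hM : symbM α β z = ((a + b) * z) • (1 : Matrix (Fin 2) (Fin 2) ℂ) + N := by
    ext i j
    fin_cases i <;> fin_cases j <;>
      simp [symbM, hNdef, Matrix.one_apply, ← ha, ← hb] <;> ring
  have hN2 : N * N = (y ^ 2) • (1 : Matrix (Fin 2) (Fin 2) ℂ) := by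
    ext i j
    fin_cases i <;> fin_cases j <;>
      simp [hNdef, Matrix.mul_apply, Fin.sum_univ_two, Matrix.one_apply] <;>
      (first | ring1 | linear_combination -hy + (z ^ 3 - a * b * z) * hab)
  have hFF : projF α β z y * projF α β z y = projF α β z y := by
    rw [hF]
    simp only [mul_add, add_mul, smul_mul_assoc, mul_smul_comm, one_mul, mul_one, hN2,
      smul_smul, smul_add]
    match_scalars <;> field_simp <;> ring
  have hMF : symbM α β z * projF α β z y = ((a + b) * z + y) • projF α β z y := by
    rw [hM, hF]
    simp only [mul_add, add_mul, smul_mul_assoc, mul_smul_comm, one_mul, mul_one, hN2,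
      smul_smul, smul_add]
    match_scalars <;> field_simp <;> ring
  have hFM : projF α β z y * symbM α β z = ((a + b) * z + y) • projF α β z y := by
    rw [hM, hF]
    simp only [mul_add, add_mul, smul_mul_assoc, mul_smul_comm, one_mul, mul_one, hN2,
      smul_smul, smul_add]
    match_scalars <;> field_simp <;> ring
  have hMIF : symbM α β z * (1 - projF α β z y) =
      ((a + b) * z - y) • (1 - projF α β z y) := by
    rw [hM, hF]
    simp only [mul_add, add_mul, mul_sub, sub_mul, smul_sub, smul_mul_assoc, mul_smul_comm,
      one_mul, mul_one, hN2, smul_smul, smul_add]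
    match_scalars <;> field_simp <;> ring
  refine ⟨hFF, ⟨hMF, hFM, hMIF⟩, fun hz => ?_⟩
  have hA : symbA α β z = (z - 1)⁻¹ • symbM α β z := rfl
  refine ⟨?_, ?_, ?_⟩
  · rw [hA, smul_mul_assoc, hMF, smul_smul, mul_comm]
  · rw [hA, mul_smul_comm, hFM, smul_smul, mul_comm]
  · rw [hA, smul_mul_assoc, hMIF, smul_smul, mul_comm]
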